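/- Let G be a K4-free simple graph on n vertices and I an independent set of G with |I| > n/3. Then e(G) ≤ (1/4)·(n − |I|)·(n + 3|I|). -/

import Mathlib

open scoped Classical
open Finset

lemma sym2_out_eq {V : Type*} (e : Sym2 V) : s(e.out.1, e.out.2) = e := by
  conv_rhs => rw [← Quot.out_eq e]

def restrictG {V : Type*} (G : SimpleGraph V) (Z : Finset V) : SimpleGraph V where
  Adj u w := G.Adj u w ∧ u ∈ Z ∧ w ∈ Z
  symm := ⟨fun u w ⟨h, hu, hw⟩ => ⟨h.symm, hw, hu⟩⟩
  loopless := ⟨fun u ⟨h, _, _⟩ => G.loopless.irrefl u h⟩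

lemma count_lem {V : Type*} [Fintype V] (H : SimpleGraph V) [DecidableRel H.Adj]
    (S T : Finset V)
    (h : ∀ u w, H.Adj u w → (u ∈ S ∧ w ∈ S) ∨ (u ∉ S ∧ w ∈ T) ∨ (w ∉ S ∧ u ∈ T)) :
    H.edgeFinset.card ≤ (H.edgeFinset.filter (fun e => ∀ x ∈ e, x ∈ S)).card
      + ∑ v ∈ Sᶜ, (T.filter (fun w => H.Adj v w)).card := by
  classical
  rw [← Finset.card_filter_add_card_filter_not
    (p := fun e => ∀ x ∈ e, x ∈ S) (s := H.edgeFinset)]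
  have key : (H.edgeFinset.filter (fun e => ¬ ∀ x ∈ e, x ∈ S)).card
      ≤ ∑ v ∈ Sᶜ, (T.filter (fun w => H.Adj v w)).card := by
    rw [← Finset.card_sigma]
    set f : Sym2 V → (Σ _ : V, V) := fun e =>
      if e.out.1 ∉ S ∧ e.out.2 ∈ T then ⟨e.out.1, e.out.2⟩ else ⟨e.out.2, e.out.1⟩ with hf
    have hfe : ∀ e : Sym2 V, s((f e).1, (f e).2) = e := by
      intro e
      rw [hf]
      dsimp only
      split
      · exact sym2_out_eq e
      · rw [Sym2.eq_swap]; exact sym2_out_eq e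
    apply Finset.card_le_card_of_injOn f
    · intro e he
      simp only [Finset.mem_coe, Finset.mem_filter, SimpleGraph.mem_edgeFinset] at he
      obtain ⟨he1, he2⟩ := he
      have hab : s(e.out.1, e.out.2) = e := sym2_out_eq e
      have hadj : H.Adj e.out.1 e.out.2 := by
        rw [← SimpleGraph.mem_edgeSet, hab]; exact he1
      have hnS : ¬ (e.out.1 ∈ S ∧ e.out.2 ∈ S) := by
        intro ⟨ha, hb⟩
        apply he2
        intro x hx
        rw [← hab, Sym2.mem_iff] at hx
        rcases hx with rfl | rfl <;> assumption
      have hd := (h _ _ hadj).resolve_left hnS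
      rw [hf]
      dsimp only
      by_cases hcase : e.out.1 ∉ S ∧ e.out.2 ∈ T
      · rw [if_pos hcase]
        simp only [Finset.mem_coe, Finset.mem_sigma, Finset.mem_compl, Finset.mem_filter]
        exact ⟨hcase.1, hcase.2, hadj⟩
      · have hd2 : e.out.2 ∉ S ∧ e.out.1 ∈ T := hd.resolve_left hcase
        rw [if_neg hcase]
        simp only [Finset.mem_coe, Finset.mem_sigma, Finset.mem_compl, Finset.mem_filter]
        exact ⟨hd2.1, hd2.2, hadj.symm⟩
    · intro e1 _ e2 _ heq
      have h1 := hfe e1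
      rw [heq, hfe e2] at h1
      exact h1.symm
  omega

theorem stmt_7 {V : Type*} [Fintype V] (G : SimpleGraph V)
    (hG : G.CliqueFree 4) (I : Finset V)
    (hI : ∀ v ∈ I, ∀ w ∈ I, ¬G.Adj v w)
    (hIbig : (I.card : ℝ) > Fintype.card V / 3) :
    (G.edgeFinset.card : ℝ) ≤
      1 / 4 * (Fintype.card V - I.card) * (Fintype.card V + 3 * I.card) := by
  classical
  set n := Fintype.card V with hn
  -- the family of triangle-free subsets avoiding I
  set C : Finset (Finset V) := Finset.univ.powerset.filter
    (fun S => (∀ x ∈ S, x ∉ I) ∧ ∀ a ∈ S, ∀ b ∈ S, ∀ c ∈ S,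
      G.Adj a b → G.Adj a c → G.Adj b c → False) with hC
  have hCne : C.Nonempty := ⟨∅, by simp [hC]⟩
  obtain ⟨Z, hZC, hZmax⟩ := C.exists_max_image Finset.card hCne
  rw [hC, Finset.mem_filter] at hZC
  obtain ⟨-, hZI, hZtf⟩ := hZC
  -- every vertex has at most |Z| neighbors outside I
  have hdeg : ∀ v : V, (Iᶜ.filter (fun w => G.Adj v w)).card ≤ Z.card := by
    intro v
    apply hZmax
    rw [hC, Finset.mem_filter]
    refine ⟨Finset.mem_powerset.2 (Finset.subset_univ _), fun x hx => ?_, ?_⟩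
    · exact Finset.mem_compl.1 (Finset.mem_of_mem_filter x hx)
    · intro a ha b hb c hc hab hac hbc
      simp only [Finset.mem_filter] at ha hb hc
      have h3 : G.IsNClique 3 {a, b, c} := SimpleGraph.is3Clique_triple_iff.2 ⟨hab, hac, hbc⟩
      have h4 : G.IsNClique 4 (insert v {a, b, c}) := by
        refine h3.insert ?_
        intro x hx
        simp only [Finset.mem_insert, Finset.mem_singleton] at hx
        rcases hx with rfl | rfl | rfl
        · exact ha.2
        · exact hb.2
        · exact hc.2
      exact hG _ h4
  -- the family of independent subsets of Z
  set C2 : Finset (Finset V) := Z.powerset.filter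
    (fun S => ∀ a ∈ S, ∀ b ∈ S, ¬ G.Adj a b) with hC2
  have hC2ne : C2.Nonempty := ⟨∅, by simp [hC2]⟩
  obtain ⟨Y, hYC, hYmax⟩ := C2.exists_max_image Finset.card hC2ne
  rw [hC2, Finset.mem_filter, Finset.mem_powerset] at hYC
  obtain ⟨hYZ, hYind⟩ := hYC
  -- every vertex of Z has at most |Y| neighbors in Z
  have hdeg2 : ∀ v ∈ Z, (Z.filter (fun w => G.Adj v w)).card ≤ Y.card := by
    intro v hv
    apply hYmax
    rw [hC2, Finset.mem_filter, Finset.mem_powerset]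
    refine ⟨Finset.filter_subset _ _, ?_⟩
    intro a ha b hb hab
    simp only [Finset.mem_filter] at ha hb
    exact hZtf v hv a ha.1 b hb.1 ha.2 hb.2 hab
  set G' := restrictG G Z with hG'
  -- application 1
  have app1 := count_lem G Z Iᶜ ?_
  swap
  · intro u w huw
    by_cases hu : u ∈ Z <;> by_cases hw : w ∈ Z
    · exact Or.inl ⟨hu, hw⟩
    · exact Or.inr (Or.inr ⟨hw, Finset.mem_compl.2 (hZI u hu)⟩)
    · exact Or.inr (Or.inl ⟨hu, Finset.mem_compl.2 (hZI w hw)⟩)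
    · by_cases hwI : w ∈ I
      · have huI : u ∉ I := fun huI => hI w hwI u huI huw.symm
        exact Or.inr (Or.inr ⟨hw, Finset.mem_compl.2 huI⟩)
      · exact Or.inr (Or.inl ⟨hu, Finset.mem_compl.2 hwI⟩)
  -- the inside-Z edges are the edges of G'
  have hins : (G.edgeFinset.filter (fun e => ∀ x ∈ e, x ∈ Z)).card = G'.edgeFinset.card := by
    congr 1
    ext e
    refine Sym2.ind (fun a b => ?_) e
    simp only [Finset.mem_filter, SimpleGraph.mem_edgeFinset, SimpleGraph.mem_edgeSet,
      Sym2.mem_iff, hG', restrictG]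
    constructor
    · rintro ⟨hab, hall⟩
      exact ⟨hab, hall a (Or.inl rfl), hall b (Or.inr rfl)⟩
    · rintro ⟨hab, ha, hb⟩
      exact ⟨hab, fun x hx => by rcases hx with rfl | rfl <;> assumption⟩
  -- application 2
  have app2 := count_lem G' Y Z ?_
  swap
  · intro u w huw
    obtain ⟨huw', hu, hw⟩ := huw
    by_cases huY : u ∈ Y
    · by_cases hwY : w ∈ Y
      · exact Or.inl ⟨huY, hwY⟩
      · exact Or.inr (Or.inr ⟨hwY, hu⟩)
    · exact Or.inr (Or.inl ⟨huY, hw⟩)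
  -- no G'-edge inside Y
  have hY0 : (G'.edgeFinset.filter (fun e => ∀ x ∈ e, x ∈ Y)).card = 0 := by
    rw [Finset.card_eq_zero, Finset.filter_eq_empty_iff]
    intro e he hall
    have hab : s(e.out.1, e.out.2) = e := sym2_out_eq e
    rw [SimpleGraph.mem_edgeFinset, ← hab, SimpleGraph.mem_edgeSet] at he
    obtain ⟨hadj, -, -⟩ := he
    have h1 := hall e.out.1 (Sym2.out_fst_mem e)
    have h2 := hall e.out.2 (Sym2.out_snd_mem e)
    exact hYind _ h1 _ h2 hadj
  -- bound the sum in application 2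
  have hsum2 : ∑ v ∈ Yᶜ, (Z.filter (fun w => G'.Adj v w)).card
      ≤ (Z.card - Y.card) * Y.card := by
    have hsub : Z \ Y ⊆ Yᶜ := fun v hv => Finset.mem_compl.2 (Finset.mem_sdiff.1 hv).2
    have hzero : ∀ v ∈ Yᶜ, v ∉ Z \ Y → (Z.filter (fun w => G'.Adj v w)).card = 0 := by
      intro v hv hvz
      rw [Finset.card_eq_zero, Finset.filter_eq_empty_iff]
      intro w hw hadj
      exact hvz (Finset.mem_sdiff.2 ⟨hadj.2.1, Finset.mem_compl.1 hv⟩)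
    rw [← Finset.sum_subset hsub hzero]
    calc ∑ v ∈ Z \ Y, (Z.filter (fun w => G'.Adj v w)).card
        ≤ (Z \ Y).card * Y.card := by
          rw [← smul_eq_mul]
          apply Finset.sum_le_card_nsmul
          intro v hv
          calc (Z.filter (fun w => G'.Adj v w)).card
              ≤ (Z.filter (fun w => G.Adj v w)).card := by
                apply Finset.card_le_card
                intro w hw
                rw [Finset.mem_filter] at hw ⊢
                exact ⟨hw.1, hw.2.1⟩
            _ ≤ Y.card := hdeg2 v (Finset.mem_sdiff.1 hv).1
      _ = (Z.card - Y.card) * Y.card := by rw [Finset.card_sdiff_of_subset hYZ]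
  -- bound the sum in application 1
  have hsum1 : ∑ v ∈ Zᶜ, (Iᶜ.filter (fun w => G.Adj v w)).card
      ≤ (n - Z.card) * Z.card := by
    calc ∑ v ∈ Zᶜ, (Iᶜ.filter (fun w => G.Adj v w)).card
        ≤ Zᶜ.card * Z.card := by
          rw [← smul_eq_mul]
          exact Finset.sum_le_card_nsmul _ _ _ (fun v _ => hdeg v)
      _ = (n - Z.card) * Z.card := by rw [Finset.card_compl]
  have hE : G.edgeFinset.card ≤ (Z.card - Y.card) * Y.card + (n - Z.card) * Z.card := by
    omega
  -- cardinality facts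
  have hYZc : Y.card ≤ Z.card := Finset.card_le_card hYZ
  have hZIn : Z.card + I.card ≤ n := by
    rw [← Finset.card_union_of_disjoint]
    · exact le_trans (Finset.card_le_univ _) (le_of_eq Finset.card_univ)
    · exact Finset.disjoint_left.2 (fun a ha => hZI a ha)
  have hZn' : Z.card ≤ n := le_trans (Nat.le_add_right _ _) hZIn
  -- move to the reals
  have hcast : (G.edgeFinset.card : ℝ)
      ≤ ((Z.card : ℝ) - Y.card) * Y.card + ((n : ℝ) - Z.card) * Z.card := by
    calc (G.edgeFinset.card : ℝ)
        ≤ (((Z.card - Y.card) * Y.card + (n - Z.card) * Z.card : ℕ) : ℝ) := Nat.cast_le.2 hE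
      _ = _ := by
        rw [Nat.cast_add, Nat.cast_mul, Nat.cast_mul, Nat.cast_sub hYZc, Nat.cast_sub hZn']
  have hzi : (Z.card : ℝ) + I.card ≤ (n : ℝ) := by exact_mod_cast hZIn
  have hy0 : (0:ℝ) ≤ (Y.card : ℝ) := Nat.cast_nonneg _
  nlinarith [sq_nonneg ((Z.card : ℝ) - 2 * Y.card),
    mul_nonneg (show (0:ℝ) ≤ (n:ℝ) - I.card - Z.card by linarith)
      (show (0:ℝ) ≤ (n:ℝ) - (3/4) * (((n:ℝ) - I.card) + Z.card) by linarith)]
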